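/- Fix q ∈ ℂ with q ≠ 0 and q not a root of unity, and p ∈ ℂ with p² = q. Let a,b,c,d,e,λ ∈ ℂ, n ∈ ℕ, and let P be a polynomial over ℂ of degree n with nonzero leading coefficient. If the function y(z) := P.eval(x(z)) satisfies (a·x(z)² + b·x(z) + c)·(𝔻(𝔻y))(z) + (d·x(z) + e)·(𝕊(𝔻y))(z) + λ·y(z) = 0 at every z ∈ ℂ∖{0} for which the denominators x(pz) − x(z/p), x(p²z) − x(z) and x(z) − x(z/p²) are all nonzero, then λ = −(q^n − 1)·(2p·(q^n − q)·a + (q − 1)·(q^n + q)·d) / (2·q^n·(q − 1)²). -/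

import Mathlib

open Complex

/-- The q-quadratic lattice x(z) = (z + z⁻¹)/2. -/
noncomputable def lat (z : ℂ) : ℂ := (z + z⁻¹) / 2

/-- Divided-difference operator on the q-quadratic lattice (p² = q). -/
noncomputable def Dq (p : ℂ) (g : ℂ → ℂ) (z : ℂ) : ℂ :=
  (g (p * z) - g (z / p)) / (lat (p * z) - lat (z / p))

/-- Averaging operator on the q-quadratic lattice (p² = q). -/
noncomputable def Sq (p : ℂ) (g : ℂ → ℂ) (z : ℂ) : ℂ :=
  (g (p * z) + g (z / p)) / 2

open Polynomial

lemma coeff_comp_CX (f : Polynomial ℂ) (r : ℂ) (k : ℕ) :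
    (f.comp (C r * X)).coeff k = r ^ k * f.coeff k := by
  induction f using Polynomial.induction_on' with
  | add f g hf hg => simp [Polynomial.add_comp, hf, hg, mul_add]
  | monomial i s =>
      rw [Polynomial.monomial_comp, mul_pow, ← Polynomial.C_pow, ← mul_assoc, ← Polynomial.C_mul]
      rw [Polynomial.coeff_C_mul, Polynomial.coeff_monomial, Polynomial.coeff_X_pow]
      by_cases h : i = k
      · subst h; simp; ring
      · simp [h, Ne.symm h]

lemma natDegree_comp_CX_le (f : Polynomial ℂ) (r : ℂ) :
    (f.comp (C r * X)).natDegree ≤ f.natDegree := by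
  refine natDegree_comp_le.trans ?_
  have : (C r * X : Polynomial ℂ).natDegree ≤ 1 :=
    natDegree_mul_le.trans (by simp)
  calc f.natDegree * (C r * X).natDegree ≤ f.natDegree * 1 := by
        exact Nat.mul_le_mul_left _ this
    _ = f.natDegree := by ring

lemma nd : ((X:Polynomial ℂ)^2+1).natDegree = 2 := by compute_degree!

noncomputable def Qq (P : Polynomial ℂ) (n : ℕ) : Polynomial ℂ :=
  ∑ k ∈ Finset.range (n+1), C (P.coeff k / 2^k) * (X^2+1)^k * X^(n-k)

lemma Qq_eval (P : Polynomial ℂ) (n : ℕ) (h : P.natDegree < n+1) (z : ℂ) (hz : z ≠ 0) :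
    (Qq P n).eval z = z^n * P.eval (lat z) := by
  rw [Polynomial.eval_eq_sum_range' h, Qq, Polynomial.eval_finset_sum, Finset.mul_sum]
  refine Finset.sum_congr rfl ?_
  intro k hk
  simp only [eval_mul, eval_pow, eval_add, eval_X, eval_one, eval_C]
  obtain ⟨m, rfl⟩ : ∃ m, n = m + k := ⟨n - k, by simp at hk; omega⟩
  have h2 : (m + k) - k = m := by omega
  rw [h2]
  have hl : lat z = (z^2+1)/(2*z) := by rw [lat]; field_simp
  rw [hl]
  rw [div_pow, mul_pow]
  field_simp
  ring

lemma Qq_natDegree_le (P : Polynomial ℂ) (n : ℕ) : (Qq P n).natDegree ≤ 2*n := by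
  refine natDegree_sum_le_of_forall_le _ _ ?_
  intro k hk
  simp only [Finset.mem_range] at hk
  calc (C (P.coeff k / 2^k) * (X^2+1)^k * X^(n-k) : Polynomial ℂ).natDegree
      ≤ (C (P.coeff k / 2^k) * (X^2+1)^k : Polynomial ℂ).natDegree + (X^(n-k) : Polynomial ℂ).natDegree :=
        natDegree_mul_le
    _ ≤ ((C (P.coeff k / 2^k) : Polynomial ℂ).natDegree + ((X^2+1 : Polynomial ℂ)^k).natDegree) + (n-k) := by
        rw [natDegree_X_pow]; exact Nat.add_le_add_right natDegree_mul_le _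
    _ ≤ (0 + k * 2) + (n-k) := by
        refine Nat.add_le_add_right (Nat.add_le_add ?_ ?_) _
        · simp
        · exact natDegree_pow_le.trans (by rw [nd])
    _ ≤ 2*n := by omega

lemma monic_X2add1 : ((X^2+1 : Polynomial ℂ)).Monic := by
  have := monic_X_pow_add_C (1:ℂ) (two_ne_zero)
  simpa using this

lemma Qq_coeff_top (P : Polynomial ℂ) (n : ℕ) :
    (Qq P n).coeff (2*n) = P.coeff n / 2^n := by
  rw [Qq, finset_sum_coeff, Finset.sum_eq_single n]
  · have hm : ((X^2+1 : Polynomial ℂ)^n).natDegree = 2*n := by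
      rw [monic_X2add1.natDegree_pow]
      rw [nd]; ring
    simp only [Nat.sub_self, pow_zero, mul_one]
    rw [coeff_C_mul]
    have : ((X^2+1: Polynomial ℂ)^n).coeff (2*n) = 1 := by
      have := (monic_X2add1.pow n).coeff_natDegree
      rwa [hm] at this
    rw [this, mul_one]
  · intro k hk hkn
    simp only [Finset.mem_range] at hk
    apply coeff_eq_zero_of_natDegree_lt
    calc (C (P.coeff k / 2^k) * (X^2+1)^k * X^(n-k) : Polynomial ℂ).natDegree
        ≤ ((0 + k*2) + (n-k)) := by
          refine natDegree_mul_le.trans ?_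
          rw [natDegree_X_pow]
          refine Nat.add_le_add_right (natDegree_mul_le.trans (Nat.add_le_add (by simp)
            (natDegree_pow_le.trans (by rw [nd])))) _
      _ < 2*n := by omega
  · intro h; exact absurd (Finset.self_mem_range_succ n) h


noncomputable def Gg (P : Polynomial ℂ) (n : ℕ) (p : ℂ) : Polynomial ℂ :=
  (Qq P n).comp (C p * X) - C ((p^n)^2) * ((Qq P n).comp (C p⁻¹ * X))

lemma Gg_natDegree_le (P : Polynomial ℂ) (n : ℕ) (p : ℂ) : (Gg P n p).natDegree ≤ 2*n := by
  refine (natDegree_sub_le _ _).trans (max_le ((natDegree_comp_CX_le _ _).trans (Qq_natDegree_le P n)) ?_)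
  refine natDegree_mul_le.trans ?_
  rw [natDegree_C, Nat.zero_add]
  exact (natDegree_comp_CX_le (Qq P n) p⁻¹).trans (Qq_natDegree_le P n)

lemma Gg_coeff_top (P : Polynomial ℂ) (n : ℕ) (p : ℂ) (hp : p ≠ 0) :
    (Gg P n p).coeff (2*n) = (P.coeff n / 2^n) * ((p^n)^2 - 1) := by
  rw [Gg, coeff_sub, coeff_comp_CX, coeff_C_mul, coeff_comp_CX, Qq_coeff_top]
  have h1 : p^(2*n) = (p^n)^2 := by ring
  have h2 : (p⁻¹)^(2*n) = ((p^n)^2)⁻¹ := by rw [inv_pow, h1]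
  rw [h1, h2]
  have hpn : (p^n)^2 ≠ 0 := pow_ne_zero _ (pow_ne_zero _ hp)
  field_simp

noncomputable def Mm (P : Polynomial ℂ) (n : ℕ) (p : ℂ) : Polynomial ℂ :=
  C (p/p^n) * ((Gg P n p).comp (C p * X)) * (X^2 - C (p^2))
  - C (p^n*p) * ((Gg P n p).comp (C p⁻¹ * X)) * (C (p^2) * X^2 - 1)

noncomputable def Mp' (P : Polynomial ℂ) (n : ℕ) (p : ℂ) : Polynomial ℂ :=
  C (p/p^n) * ((Gg P n p).comp (C p * X)) * (X^2 - C (p^2))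
  + C (p^n*p) * ((Gg P n p).comp (C p⁻¹ * X)) * (C (p^2) * X^2 - 1)

lemma aux_nd1 (P : Polynomial ℂ) (n : ℕ) (p : ℂ) :
    (C (p/p^n) * ((Gg P n p).comp (C p * X)) : Polynomial ℂ).natDegree ≤ 2*n := by
  refine natDegree_mul_le.trans ?_
  rw [natDegree_C, Nat.zero_add]
  exact (natDegree_comp_CX_le (Gg P n p) p).trans (Gg_natDegree_le P n p)

lemma aux_nd2 (P : Polynomial ℂ) (n : ℕ) (p : ℂ) :
    (C (p^n*p) * ((Gg P n p).comp (C p⁻¹ * X)) : Polynomial ℂ).natDegree ≤ 2*n := by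
  refine natDegree_mul_le.trans ?_
  rw [natDegree_C, Nat.zero_add]
  exact (natDegree_comp_CX_le (Gg P n p) p⁻¹).trans (Gg_natDegree_le P n p)

lemma Mm_natDegree_le (P : Polynomial ℂ) (n : ℕ) (p : ℂ) : (Mm P n p).natDegree ≤ 2*n+2 := by
  refine (natDegree_sub_le _ _).trans (max_le ?_ ?_) <;>
  · refine natDegree_mul_le.trans ?_
    refine Nat.add_le_add (by first | exact aux_nd1 P n p | exact aux_nd2 P n p) (by compute_degree!)

lemma Mp'_natDegree_le (P : Polynomial ℂ) (n : ℕ) (p : ℂ) : (Mp' P n p).natDegree ≤ 2*n+2 := by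
  refine natDegree_add_le_of_degree_le ?_ ?_ <;>
  · refine natDegree_mul_le.trans ?_
    refine Nat.add_le_add (by first | exact aux_nd1 P n p | exact aux_nd2 P n p) (by compute_degree!)

lemma cX2mCp2 (p : ℂ) : ((X^2 - C (p^2) : Polynomial ℂ)).coeff 2 = 1 := by
  rw [coeff_sub, coeff_X_pow, coeff_C]
  norm_num
lemma cCp2X2m1 (p : ℂ) : ((C (p^2) * X^2 - 1 : Polynomial ℂ)).coeff 2 = p^2 := by
  rw [coeff_sub, coeff_C_mul, coeff_X_pow]
  simp [coeff_one]

lemma Mm_coeff_top (P : Polynomial ℂ) (n : ℕ) (p : ℂ) (hp : p ≠ 0) :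
    (Mm P n p).coeff (2*n+2)
      = (P.coeff n / 2^n) * ((p^n)^2 - 1) * (p * p^n) - (P.coeff n / 2^n) * ((p^n)^2 - 1) * (p^3 / p^n) := by
  rw [Mm, coeff_sub,
    coeff_mul_add_eq_of_natDegree_le (aux_nd1 P n p) (by compute_degree!),
    coeff_mul_add_eq_of_natDegree_le (aux_nd2 P n p) (by compute_degree!),
    cX2mCp2, cCp2X2m1, coeff_C_mul, coeff_C_mul, coeff_comp_CX, coeff_comp_CX,
    Gg_coeff_top P n p hp]
  have h1 : p^(2*n) = (p^n)^2 := by ring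
  have h2 : (p⁻¹)^(2*n) = ((p^n)^2)⁻¹ := by rw [inv_pow, h1]
  rw [h1, h2]
  have hpn : (p:ℂ)^n ≠ 0 := pow_ne_zero _ hp
  field_simp

lemma Mp'_coeff_top (P : Polynomial ℂ) (n : ℕ) (p : ℂ) (hp : p ≠ 0) :
    (Mp' P n p).coeff (2*n+2)
      = (P.coeff n / 2^n) * ((p^n)^2 - 1) * (p * p^n) + (P.coeff n / 2^n) * ((p^n)^2 - 1) * (p^3 / p^n) := by
  rw [Mp', coeff_add,
    coeff_mul_add_eq_of_natDegree_le (aux_nd1 P n p) (by compute_degree!),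
    coeff_mul_add_eq_of_natDegree_le (aux_nd2 P n p) (by compute_degree!),
    cX2mCp2, cCp2X2m1, coeff_C_mul, coeff_C_mul, coeff_comp_CX, coeff_comp_CX,
    Gg_coeff_top P n p hp]
  have h1 : p^(2*n) = (p^n)^2 := by ring
  have h2 : (p⁻¹)^(2*n) = ((p^n)^2)⁻¹ := by rw [inv_pow, h1]
  rw [h1, h2]
  have hpn : (p:ℂ)^n ≠ 0 := pow_ne_zero _ hp
  field_simp

noncomputable def W1 (a b c : ℂ) : Polynomial ℂ :=
  C a*X^4 + C (2*b)*X^3 + C (2*a+4*c)*X^2 + C (2*b)*X + C a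
noncomputable def Vv (d e : ℂ) : Polynomial ℂ := C d*X^2 + C (2*e)*X + C d
noncomputable def Bb (p : ℂ) : Polynomial ℂ := (X^2-1)*(C (p^2)*X^2-1)*(X^2-C (p^2))*X^2

noncomputable def Rr (P : Polynomial ℂ) (n : ℕ) (p a b c d e lambda : ℂ) : Polynomial ℂ :=
  (C (p^2) * W1 a b c * Mm P n p) * X^2
  + (C ((p^2-1)*p/2) * Vv d e * ((X^2-1) * X^2)) * Mp' P n p
  + (C (p^n*(p^2-1)^2*lambda) * Qq P n) * Bb p

lemma W1_coeff4 (a b c : ℂ) : (W1 a b c).coeff 4 = a := by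
  rw [W1]
  simp only [coeff_add, coeff_C_mul, coeff_X_pow, coeff_C, coeff_X]
  norm_num
lemma W1_nd (a b c : ℂ) : (W1 a b c).natDegree ≤ 4 := by rw [W1]; compute_degree
lemma Vv_coeff2 (d e : ℂ) : (Vv d e).coeff 2 = d := by
  rw [Vv]
  simp only [coeff_add, coeff_C_mul, coeff_X_pow, coeff_C, coeff_X]
  norm_num
lemma Vv_nd (d e : ℂ) : (Vv d e).natDegree ≤ 2 := by rw [Vv]; compute_degree

lemma X21X2_coeff : (((X^2-1) * X^2 : Polynomial ℂ)).coeff 4 = 1 := by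
  have : ((X^2-1) * X^2 : Polynomial ℂ) = X^4 - X^2 := by ring
  rw [this, coeff_sub, coeff_X_pow, coeff_X_pow]; norm_num
lemma X21X2_nd : (((X^2-1) * X^2 : Polynomial ℂ)).natDegree ≤ 4 := by compute_degree
lemma X2m1_coeff2 : ((X^2-1 : Polynomial ℂ)).coeff 2 = 1 := by
  rw [coeff_sub, coeff_X_pow, coeff_one]; norm_num
lemma Bb_coeff8 (p : ℂ) : (Bb p).coeff 8 = p^2 := by
  have c4 : (((X^2-1)*(C (p^2)*X^2-1) : Polynomial ℂ)).coeff 4 = p^2 := by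
    rw [(by norm_num : (4:ℕ) = 2+2), coeff_mul_add_eq_of_natDegree_le (by compute_degree) (by compute_degree),
      X2m1_coeff2, cCp2X2m1]
    ring
  have c6 : (((X^2-1)*(C (p^2)*X^2-1)*(X^2-C (p^2)) : Polynomial ℂ)).coeff 6 = p^2 := by
    rw [(by norm_num : (6:ℕ) = 4+2), coeff_mul_add_eq_of_natDegree_le (by compute_degree) (by compute_degree),
      c4, cX2mCp2]
    ring
  rw [Bb, (by norm_num : (8:ℕ) = 6+2), coeff_mul_add_eq_of_natDegree_le (by compute_degree) (by compute_degree),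
    c6, coeff_X_pow]
  norm_num
lemma Bb_nd (p : ℂ) : (Bb p).natDegree ≤ 8 := by rw [Bb]; compute_degree

lemma Rr_coeff (P : Polynomial ℂ) (n : ℕ) (p a b c d e lambda : ℂ) (hp : p ≠ 0) :
    (Rr P n p a b c d e lambda).coeff (2*n+8)
      = p^2 * a * ((P.coeff n / 2^n) * ((p^n)^2 - 1) * (p * p^n) - (P.coeff n / 2^n) * ((p^n)^2 - 1) * (p^3 / p^n))
      + ((p^2-1)*p/2) * d * ((P.coeff n / 2^n) * ((p^n)^2 - 1) * (p * p^n) + (P.coeff n / 2^n) * ((p^n)^2 - 1) * (p^3 / p^n))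
      + p^n*(p^2-1)^2*lambda * (P.coeff n / 2^n) * p^2 := by
  have nd1 : (C (p^2) * W1 a b c : Polynomial ℂ).natDegree ≤ 4 := by
    refine natDegree_mul_le.trans ?_
    rw [natDegree_C, Nat.zero_add]; exact W1_nd a b c
  have nd1' : (C (p^2) * W1 a b c * Mm P n p).natDegree ≤ 2*n+6 := by
    refine natDegree_mul_le.trans ?_
    have := Mm_natDegree_le P n p
    omega
  have t1 : ((C (p^2) * W1 a b c * Mm P n p) * X^2).coeff (2*n+8)
      = p^2 * a * (Mm P n p).coeff (2*n+2) := by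
    rw [show 2*n+8 = (2*n+6)+2 from by ring,
      coeff_mul_add_eq_of_natDegree_le nd1' (by compute_degree),
      show 2*n+6 = 4+(2*n+2) from by ring,
      coeff_mul_add_eq_of_natDegree_le nd1 (Mm_natDegree_le P n p),
      coeff_C_mul, W1_coeff4, coeff_X_pow]
    norm_num
  have nd2 : (C ((p^2-1)*p/2) * Vv d e : Polynomial ℂ).natDegree ≤ 2 := by
    refine natDegree_mul_le.trans ?_
    rw [natDegree_C, Nat.zero_add]; exact Vv_nd d e
  have nd2' : (C ((p^2-1)*p/2) * Vv d e * ((X^2-1) * X^2) : Polynomial ℂ).natDegree ≤ 6 := by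
    refine natDegree_mul_le.trans ?_
    have := X21X2_nd
    omega
  have t2 : ((C ((p^2-1)*p/2) * Vv d e * ((X^2-1) * X^2)) * Mp' P n p).coeff (2*n+8)
      = ((p^2-1)*p/2) * d * (Mp' P n p).coeff (2*n+2) := by
    have c6 : (C ((p^2-1)*p/2) * Vv d e * ((X^2-1) * X^2) : Polynomial ℂ).coeff 6
        = ((p^2-1)*p/2) * d := by
      rw [(by norm_num : (6:ℕ) = 2+4), coeff_mul_add_eq_of_natDegree_le nd2 X21X2_nd,
        coeff_C_mul, Vv_coeff2, X21X2_coeff]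
      ring
    rw [show 2*n+8 = 6+(2*n+2) from by ring,
      coeff_mul_add_eq_of_natDegree_le nd2' (Mp'_natDegree_le P n p), c6]
  have nd3 : (C (p^n*(p^2-1)^2*lambda) * Qq P n : Polynomial ℂ).natDegree ≤ 2*n := by
    refine natDegree_mul_le.trans ?_
    rw [natDegree_C, Nat.zero_add]; exact Qq_natDegree_le P n
  have t3 : ((C (p^n*(p^2-1)^2*lambda) * Qq P n) * Bb p).coeff (2*n+8)
      = p^n*(p^2-1)^2*lambda * (P.coeff n / 2^n) * p^2 := by
    rw [coeff_mul_add_eq_of_natDegree_le nd3 (Bb_nd p), coeff_C_mul, Qq_coeff_top, Bb_coeff8]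
  rw [Rr, coeff_add, coeff_add, t1, t2, t3, Mm_coeff_top P n p hp, Mp'_coeff_top P n p hp]
set_option maxHeartbeats 2000000 in
lemma big_identity (p z a b c d e lam A2 A1 A0 : ℂ) (n : ℕ)
    (hp0 : p ≠ 0) (hz0 : z ≠ 0) (hq0 : p^2 ≠ 0) (hq1 : p^2-1 ≠ 0)
    (e1 : z^2-1 ≠ 0) (e2 : p^2*z^2-1 ≠ 0) (e3 : z^2-p^2 ≠ 0)
    (hpn : p^n ≠ 0) (hzn : z^n ≠ 0) (hpn2 : (p^n)^2 ≠ 0) :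
    p^2*(a*z^4+2*b*z^3+(2*a+4*c)*z^2+2*b*z+a)*((p/p^n)*(A2-(p^n)^2*A1)*(z^2-p^2)-(p^n*p)*(A1-(p^n)^2*A0)*(p^2*z^2-1))*z^2
     + (p^2-1)*p/2*(d*z^2+2*e*z+d)*((z^2-1)*z^2)*((p/p^n)*(A2-(p^n)^2*A1)*(z^2-p^2)+(p^n*p)*(A1-(p^n)^2*A0)*(p^2*z^2-1))
     + p^n*(p^2-1)^2*lam*A1*((z^2-1)*(p^2*z^2-1)*(z^2-p^2)*z^2)
    = p^n*(p^2-1)^2*(z^2-1)*(p^2*z^2-1)*(z^2-p^2)*z^2*z^n*(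
      (a*((z^2+1)/(2*z))^2+b*((z^2+1)/(2*z))+c)*(((A2/((p^n)^2*z^n)-A1/z^n)/((p^2-1)*(p^2*z^2-1)/(2*(p^2*z)))
       - (A1/z^n - A0/(z^n/(p^n)^2))/((p^2-1)*(z^2-p^2)/(2*(p^2*z))))/((p^2-1)*(z^2-1)/(2*(p*z))))
     + (d*((z^2+1)/(2*z))+e)*(((A2/((p^n)^2*z^n)-A1/z^n)/((p^2-1)*(p^2*z^2-1)/(2*(p^2*z)))
       + (A1/z^n - A0/(z^n/(p^n)^2))/((p^2-1)*(z^2-p^2)/(2*(p^2*z))))/2)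
     + lam*(A1/z^n)) := by
  field_simp
  have hb1 : (2*z : ℂ) ≠ 0 := mul_ne_zero two_ne_zero hz0
  have inner1 : ((p ^ n) ^ 2 * z ^ n * z ^ n * ((p ^ 2 - 1) * (p ^ 2 * z ^ 2 - 1)) : ℂ) ≠ 0 :=
    mul_ne_zero (mul_ne_zero (mul_ne_zero hpn2 hzn) hzn) (mul_ne_zero hq1 e2)
  have inner2 : (z ^ n * ((p ^ 2 - 1) * (z ^ 2 - p ^ 2)) : ℂ) ≠ 0 :=
    mul_ne_zero hzn (mul_ne_zero hq1 e3)
  have hD1 : ((2 * z) ^ 2 * (2 * z) *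
                  ((p ^ n) ^ 2 * z ^ n * z ^ n * ((p ^ 2 - 1) * (p ^ 2 * z ^ 2 - 1)) *
                      (z ^ n * ((p ^ 2 - 1) * (z ^ 2 - p ^ 2))) *
                    ((p ^ 2 - 1) * (z ^ 2 - 1))) : ℂ) ≠ 0 :=
    mul_ne_zero (mul_ne_zero (pow_ne_zero 2 hb1) hb1)
      (mul_ne_zero (mul_ne_zero inner1 inner2) (mul_ne_zero hq1 e1))
  have hD2 : ((2 * z *
                  ((p ^ n) ^ 2 * z ^ n * z ^ n * ((p ^ 2 - 1) * (p ^ 2 * z ^ 2 - 1)) *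
                      (z ^ n * ((p ^ 2 - 1) * (z ^ 2 - p ^ 2))) *
                    2)) : ℂ) ≠ 0 :=
    mul_ne_zero hb1 (mul_ne_zero (mul_ne_zero inner1 inner2) two_ne_zero)
  ring


set_option maxHeartbeats 3200000 in
theorem stmt_4 (q p : ℂ) (hq0 : q ≠ 0) (hqru : ∀ m : ℕ, 0 < m → q ^ m ≠ 1)
    (hp : p^2 = q) (a b c d e lambda : ℂ) (n : ℕ) (P : Polynomial ℂ)
    (hdeg : P.natDegree = n) (hlead : P.leadingCoeff ≠ 0)
    (hde : ∀ z : ℂ, z ≠ 0 →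
      lat (p * z) - lat (z / p) ≠ 0 →
      lat (p^2 * z) - lat z ≠ 0 →
      lat z - lat (z / p^2) ≠ 0 →
      (a * (lat z)^2 + b * lat z + c) * Dq p (Dq p (fun w => P.eval (lat w))) z
        + (d * lat z + e) * Sq p (Dq p (fun w => P.eval (lat w))) z
        + lambda * P.eval (lat z) = 0) :
    lambda = -(q^n - 1) * (2*p*(q^n - q)*a + (q - 1)*(q^n + q)*d) / (2 * q^n * (q - 1)^2) := by
  subst hp
  have hp0 : p ≠ 0 := fun h => hq0 (by rw [h]; ring)
  have hq1 : p^2 - 1 ≠ 0 := by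
    intro h
    exact hqru 1 one_pos (by rw [pow_one]; linear_combination h)
  have hpn : (p:ℂ)^n ≠ 0 := pow_ne_zero _ hp0
  have hPd : P.natDegree < n + 1 := by rw [hdeg]; omega
  have hR : Rr P n p a b c d e lambda = 0 := by
    apply Polynomial.eq_zero_of_infinite_isRoot
    have hfin : ({0,1,-1,p,-p,p⁻¹,-p⁻¹} : Set ℂ).Finite := Set.toFinite _
    refine Set.Infinite.mono ?_ hfin.infinite_compl
    intro z hz
    simp only [Set.mem_compl_iff, Set.mem_insert_iff, Set.mem_singleton_iff, not_or] at hz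
    obtain ⟨hz0, hz1, hz2, hz3, hz4, hz5, hz6⟩ := hz
    have e1 : z^2 - 1 ≠ 0 := by
      intro h
      have : (z-1)*(z+1) = 0 := by linear_combination h
      rcases mul_eq_zero.mp this with h' | h'
      · exact hz1 (by linear_combination h')
      · exact hz2 (by linear_combination h')
    have e2 : p^2*z^2 - 1 ≠ 0 := by
      intro h
      have : (p*z-1)*(p*z+1) = 0 := by linear_combination h
      rcases mul_eq_zero.mp this with h' | h'
      · exact hz5 (eq_inv_of_mul_eq_one_left (by linear_combination h'))
      · refine hz6 ?_
        rw [neg_inv]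
        exact eq_inv_of_mul_eq_one_left (by linear_combination -h')
    have e3 : z^2 - p^2 ≠ 0 := by
      intro h
      have : (z-p)*(z+p) = 0 := by linear_combination h
      rcases mul_eq_zero.mp this with h' | h'
      · exact hz3 (by linear_combination h')
      · exact hz4 (by linear_combination h')
    have hd1 : lat (p*z) - lat (z/p) = (p^2-1)*(z^2-1)/(2*(p*z)) := by
      simp only [lat]
      field_simp
      ring
    have hd2 : lat (p^2*z) - lat z = (p^2-1)*(p^2*z^2-1)/(2*(p^2*z)) := by
      simp only [lat]
      field_simp
      ring
    have hd3 : lat z - lat (z/p^2) = (p^2-1)*(z^2-p^2)/(2*(p^2*z)) := by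
      simp only [lat]
      field_simp
      ring
    have hn1 : lat (p*z) - lat (z/p) ≠ 0 := by
      rw [hd1]
      exact div_ne_zero (mul_ne_zero hq1 e1) (mul_ne_zero two_ne_zero (mul_ne_zero hp0 hz0))
    have hn2 : lat (p^2*z) - lat z ≠ 0 := by
      rw [hd2]
      exact div_ne_zero (mul_ne_zero hq1 e2) (mul_ne_zero two_ne_zero (mul_ne_zero hq0 hz0))
    have hn3 : lat z - lat (z/p^2) ≠ 0 := by
      rw [hd3]
      exact div_ne_zero (mul_ne_zero hq1 e3) (mul_ne_zero two_ne_zero (mul_ne_zero hq0 hz0))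
    have h := hde z hz0 hn1 hn2 hn3
    have hzn : z^n ≠ 0 := pow_ne_zero _ hz0
    have key2 : (Rr P n p a b c d e lambda).eval z
        = (p^n*(p^2-1)^2*(z^2-1)*(p^2*z^2-1)*(z^2-p^2)*z^2*z^n) *
          ((a * (lat z)^2 + b * lat z + c) * Dq p (Dq p (fun w => P.eval (lat w))) z
            + (d * lat z + e) * Sq p (Dq p (fun w => P.eval (lat w))) z
            + lambda * P.eval (lat z)) := by
      have a1 : p*(p*z) = p^2*z := by ring
      have a2 : p*z/p = z := by field_simp
      have a3 : p*(z/p) = z := by field_simp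
      have a4 : z/p/p = z/p^2 := by rw [div_div]; ring_nf
      have a5 : p⁻¹*(p*z) = z := by field_simp
      have a6 : p*(p⁻¹*z) = z := by field_simp
      have a7 : p⁻¹*(p⁻¹*z) = z/p^2 := by
        rw [eq_div_iff hq0]
        field_simp
      have hP1 : P.eval (lat (p^2*z)) = (Qq P n).eval (p^2*z) / (p^2*z)^n := by
        rw [Qq_eval P n hPd (p^2*z) (mul_ne_zero hq0 hz0)]
        field_simp
      have hP2 : P.eval (lat z) = (Qq P n).eval z / z^n := by
        rw [Qq_eval P n hPd z hz0]
        field_simp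
      have hP3 : P.eval (lat (z/p^2)) = (Qq P n).eval (z/p^2) / (z/p^2)^n := by
        rw [Qq_eval P n hPd (z/p^2) (div_ne_zero hz0 hq0)]
        field_simp
      have hpow1 : (p^2*z)^n = (p^n)^2*z^n := by ring
      have hpow2 : (z/p^2)^n = z^n/(p^n)^2 := by
        rw [div_pow]
        ring_nf
      have hlatz : lat z = (z^2+1)/(2*z) := by
        rw [lat]; field_simp
      simp only [Dq, Sq]
      rw [a1, a2, a3, a4, hd1, hd2, hd3, hP1, hP2, hP3, hpow1, hpow2, hlatz]
      simp only [Rr, Mm, Mp', W1, Vv, Bb, Gg, eval_add, eval_mul, eval_sub, eval_pow,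
        eval_C, eval_X, eval_one, eval_comp]
      rw [a1, a5, a6, a7]
      have hpn2 : ((p:ℂ)^n)^2 ≠ 0 := pow_ne_zero _ hpn
      generalize (Qq P n).eval (p^2*z) = A2
      generalize (Qq P n).eval (z/p^2) = A0
      generalize (Qq P n).eval z = A1
      linear_combination big_identity p z a b c d e lambda A2 A1 A0 n hp0 hz0 hq0 hq1 e1 e2 e3 hpn hzn hpn2
    show Polynomial.IsRoot _ z
    rw [Polynomial.IsRoot.def, key2, h, mul_zero]
  have hco := congrArg (fun f : Polynomial ℂ => f.coeff (2*n+8)) hR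
  simp only [coeff_zero] at hco
  rw [Rr_coeff P n p a b c d e lambda hp0] at hco
  have hkap : P.coeff n = P.leadingCoeff := by rw [← hdeg]; rfl
  rw [hkap] at hco
  have h2n : ((2:ℂ))^n ≠ 0 := pow_ne_zero _ two_ne_zero
  have hq2n : ((p:ℂ)^2)^n ≠ 0 := pow_ne_zero _ hq0
  obtain ⟨u, hu⟩ : ∃ u : ℂ, p^n = u := ⟨_, rfl⟩
  obtain ⟨v, hv⟩ : ∃ v : ℂ, (2:ℂ)^n = v := ⟨_, rfl⟩
  rw [hu, hv] at hco
  rw [hu] at hpn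
  rw [hv] at h2n
  obtain ⟨w, hw⟩ : ∃ w : ℂ, P.leadingCoeff / v = w := ⟨_, rfl⟩
  obtain ⟨t, ht⟩ : ∃ t : ℂ, p^3 / u = t := ⟨_, rfl⟩
  rw [hw, ht] at hco
  have hwn : w ≠ 0 := by rw [← hw]; exact div_ne_zero hlead h2n
  have hp3 : p^3 = t*u := (div_eq_iff hpn).mp ht
  have hco4 : p^2*a*((u^2-1)*p*u^2 - (u^2-1)*p^3)
      + ((p^2-1)*p/2)*d*((u^2-1)*p*u^2 + (u^2-1)*p^3)
      + u^2*(p^2-1)^2*lambda*p^2 = 0 := by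
    apply mul_left_cancel₀ hwn
    calc w * (p^2*a*((u^2-1)*p*u^2 - (u^2-1)*p^3)
        + ((p^2-1)*p/2)*d*((u^2-1)*p*u^2 + (u^2-1)*p^3)
        + u^2*(p^2-1)^2*lambda*p^2)
        = u * (p ^ 2 * a * (w * (u ^ 2 - 1) * (p * u) - w * (u ^ 2 - 1) * t) +
            (p ^ 2 - 1) * p / 2 * d * (w * (u ^ 2 - 1) * (p * u) + w * (u ^ 2 - 1) * t) +
            u * (p ^ 2 - 1) ^ 2 * lambda * w * p ^ 2) := by
          linear_combination (w*(u^2-1)*((p^2-1)*p*d/2 - p^2*a)) * hp3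
      _ = u * 0 := by rw [hco]
      _ = w * 0 := by ring
  have hq2nu : ((p^2:ℂ))^n = u^2 := by rw [← hu]; ring
  rw [hq2nu]
  have hden : (2:ℂ) * u^2 * (p^2-1)^2 ≠ 0 :=
    mul_ne_zero (mul_ne_zero two_ne_zero (pow_ne_zero 2 hpn)) (pow_ne_zero 2 hq1)
  rw [eq_div_iff hden]
  have final : lambda * (2 * u^2 * (p^2-1)^2) * p^2
      = (-(u^2 - 1) * (2*p*(u^2 - p^2)*a + (p^2 - 1)*(u^2 + p^2)*d)) * p^2 := by
    linear_combination 2 * hco4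
  exact mul_right_cancel₀ hq0 final
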